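/- Given the decomposition Occ(P,T) = { j + k - 1 | (X, j) is a primary occurrence of P and k ∈ vOcc(X, S) } for an SLP: every occurrence of a pattern P with |P| ≥ 2 in T = val(S) is uniquely captured by a lowest variable X in the derivation tree such that the occurrence crosses the boundary between X.left and X.right; formally, for each occurrence position o of P in T there exist unique X in the derivation tree (as a node) and split 1 ≤ j' < |P| such that P[1..j'] is a suffix of val(X_ℓ) and P[j'+1..] is a prefix of val(X_r), where X → X_ℓ X_r. -/
import Mathlib


/-- Follow a root-to-node path (false = left, true = right) in the derivation
tree of an SLP, returning the variable at that node together with the starting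
position (0-indexed) of the substring it derives. -/
def nodeAt {α : Type*} {n : ℕ} (rhs : Fin n → α ⊕ (Fin n × Fin n))
    (v : Fin n → List α) : Fin n → ℕ → List Bool → Option (Fin n × ℕ)
  | i, p, [] => some (i, p)
  | i, p, b :: π =>
    match rhs i with
    | Sum.inl _ => none
    | Sum.inr (l, r) =>
      if b then nodeAt rhs v r (p + (v l).length) π else nodeAt rhs v l p π

/-- Interval containment along a path. -/
lemma nodeAt_contain {α : Type*} {n : ℕ} (rhs : Fin n → α ⊕ (Fin n × Fin n))
    (v : Fin n → List α)
    (hv2 : ∀ i p, rhs i = Sum.inr p → v i = v p.1 ++ v p.2) :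
    ∀ (π : List Bool) (i : Fin n) (p : ℕ) (i' : Fin n) (p' : ℕ),
      nodeAt rhs v i p π = some (i', p') →
      p ≤ p' ∧ p' + (v i').length ≤ p + (v i).length
  | [], i, p, i', p', h => by
      simp only [nodeAt, Option.some.injEq, Prod.mk.injEq] at h
      obtain ⟨h1, h2⟩ := h; subst h1; subst h2; omega
  | b :: π, i, p, i', p', h => by
      simp only [nodeAt] at h
      cases hr : rhs i with
      | inl a => rw [hr] at h; simp at h
      | inr pr =>
        obtain ⟨l, r⟩ := pr
        rw [hr] at h
        have hlen : (v i).length = (v l).length + (v r).length := by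
          rw [hv2 i (l, r) hr]; simp
        by_cases hb : b
        · simp only [hb, if_true] at h
          have := nodeAt_contain rhs v hv2 π r (p + (v l).length) i' p' h
          omega
        · simp only [hb, if_false] at h
          have := nodeAt_contain rhs v hv2 π l p i' p' h
          omega

/-- Existence of a lowest straddling node. -/
lemma exists_node {α : Type*} {n : ℕ} (rhs : Fin n → α ⊕ (Fin n × Fin n))
    (wf : ∀ i p, rhs i = Sum.inr p → p.1 < i ∧ p.2 < i)
    (v : Fin n → List α)
    (hv1 : ∀ i a, rhs i = Sum.inl a → v i = [a])
    (hv2 : ∀ i p, rhs i = Sum.inr p → v i = v p.1 ++ v p.2)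
    (P : List α) (hP : 2 ≤ P.length) (o : ℕ) :
    ∀ (N : ℕ) (i : Fin n), (i : ℕ) < N → ∀ p : ℕ, p ≤ o →
      o + P.length ≤ p + (v i).length →
      ∃ (π : List Bool) (j' : ℕ) (i2 : Fin n) (p2 : ℕ) (l r : Fin n),
        nodeAt rhs v i p π = some (i2, p2) ∧ rhs i2 = Sum.inr (l, r) ∧
        1 ≤ j' ∧ j' < P.length ∧ p2 ≤ o ∧
        o + P.length ≤ p2 + (v i2).length ∧ p2 + (v l).length = o + j' := by
  intro N
  induction N with
  | zero => intro i hi; omega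
  | succ N ih =>
    intro i hi p hp hlen
    cases hr : rhs i with
    | inl a =>
      have : v i = [a] := hv1 i a hr
      rw [this] at hlen; simp at hlen; omega
    | inr pr =>
      obtain ⟨l, r⟩ := pr
      have hl : (l : ℕ) < (i : ℕ) := (wf i (l, r) hr).1
      have hrlt : (r : ℕ) < (i : ℕ) := (wf i (l, r) hr).2
      have hlen2 : (v i).length = (v l).length + (v r).length := by
        rw [hv2 i (l, r) hr]; simp
      by_cases h1 : o + P.length ≤ p + (v l).length
      · obtain ⟨π, j', i2, p2, l', r', hnode, hrest⟩ :=
          ih l (by omega) p hp h1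
        refine ⟨false :: π, j', i2, p2, l', r', ?_, hrest⟩
        simp only [nodeAt, hr]
        exact hnode
      · by_cases h2 : p + (v l).length ≤ o
        · obtain ⟨π, j', i2, p2, l', r', hnode, hrest⟩ :=
            ih r (by omega) (p + (v l).length) h2 (by omega)
          refine ⟨true :: π, j', i2, p2, l', r', ?_, hrest⟩
          simp only [nodeAt, hr]
          exact hnode
        · refine ⟨[], p + (v l).length - o, i, p, l, r, rfl, hr, ?_, ?_, hp, hlen, ?_⟩
          all_goals omega

/-- Uniqueness of the straddling path. -/
lemma unique_node {α : Type*} {n : ℕ} (rhs : Fin n → α ⊕ (Fin n × Fin n))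
    (v : Fin n → List α)
    (hv2 : ∀ i p, rhs i = Sum.inr p → v i = v p.1 ++ v p.2)
    (P : List α) (hP : 2 ≤ P.length) (o : ℕ) :
    ∀ (π₁ π₂ : List Bool) (i : Fin n) (p : ℕ),
      (∃ (i2 : Fin n) (p2 : ℕ) (l r : Fin n),
        nodeAt rhs v i p π₁ = some (i2, p2) ∧ rhs i2 = Sum.inr (l, r) ∧
        p2 ≤ o ∧ o + P.length ≤ p2 + (v i2).length ∧
        o < p2 + (v l).length ∧ p2 + (v l).length < o + P.length) →
      (∃ (i2 : Fin n) (p2 : ℕ) (l r : Fin n),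
        nodeAt rhs v i p π₂ = some (i2, p2) ∧ rhs i2 = Sum.inr (l, r) ∧
        p2 ≤ o ∧ o + P.length ≤ p2 + (v i2).length ∧
        o < p2 + (v l).length ∧ p2 + (v l).length < o + P.length) →
      π₁ = π₂
  | [], [], i, p, _, _ => rfl
  | [], b :: π₂, i, p, h1, h2 => by
      obtain ⟨i2, p2, l, r, hnode, hr, _, _, hlo, hhi⟩ := h1
      simp only [nodeAt, Option.some.injEq, Prod.mk.injEq] at hnode
      obtain ⟨e1, e2⟩ := hnode; subst e1; subst e2
      obtain ⟨i2', p2', l', r', hnode', _, hle', hge', _, _⟩ := h2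
      simp only [nodeAt, hr] at hnode'
      by_cases hb : b
      · simp only [hb, if_true] at hnode'
        have := nodeAt_contain rhs v hv2 π₂ r (p + (v l).length) i2' p2' hnode'
        omega
      · simp only [hb, if_false] at hnode'
        have := nodeAt_contain rhs v hv2 π₂ l p i2' p2' hnode'
        omega
  | b :: π₁, [], i, p, h1, h2 => by
      obtain ⟨i2, p2, l, r, hnode, hr, _, _, hlo, hhi⟩ := h2
      simp only [nodeAt, Option.some.injEq, Prod.mk.injEq] at hnode
      obtain ⟨e1, e2⟩ := hnode; subst e1; subst e2
      obtain ⟨i2', p2', l', r', hnode', _, hle', hge', _, _⟩ := h1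
      simp only [nodeAt, hr] at hnode'
      by_cases hb : b
      · simp only [hb, if_true] at hnode'
        have := nodeAt_contain rhs v hv2 π₁ r (p + (v l).length) i2' p2' hnode'
        omega
      · simp only [hb, if_false] at hnode'
        have := nodeAt_contain rhs v hv2 π₁ l p i2' p2' hnode'
        omega
  | b₁ :: π₁, b₂ :: π₂, i, p, h1, h2 => by
      obtain ⟨i2, p2, l, r, hnode, hrest⟩ := h1
      obtain ⟨i2', p2', l', r', hnode', hrest'⟩ := h2
      simp only [nodeAt] at hnode hnode'
      cases hr : rhs i with
      | inl a => rw [hr] at hnode; simp at hnode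
      | inr pr =>
        obtain ⟨l0, r0⟩ := pr
        rw [hr] at hnode hnode'
        cases b₁ <;> cases b₂ <;>
            simp only [Bool.false_eq_true, if_true, if_false] at hnode hnode'
        · have := unique_node rhs v hv2 P hP o π₁ π₂ l0 p
            ⟨i2, p2, l, r, hnode, hrest⟩ ⟨i2', p2', l', r', hnode', hrest'⟩
          rw [this]
        · have c1 := nodeAt_contain rhs v hv2 π₁ l0 p i2 p2 hnode
          have c2 := nodeAt_contain rhs v hv2 π₂ r0 (p + (v l0).length) i2' p2' hnode'
          obtain ⟨_, hle, hge, _, _⟩ := hrest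
          obtain ⟨_, hle', hge', _, _⟩ := hrest'
          omega
        · have c1 := nodeAt_contain rhs v hv2 π₁ r0 (p + (v l0).length) i2 p2 hnode
          have c2 := nodeAt_contain rhs v hv2 π₂ l0 p i2' p2' hnode'
          obtain ⟨_, hle, hge, _, _⟩ := hrest
          obtain ⟨_, hle', hge', _, _⟩ := hrest'
          omega
        · have := unique_node rhs v hv2 P hP o π₁ π₂ r0 (p + (v l0).length)
            ⟨i2, p2, l, r, hnode, hrest⟩ ⟨i2', p2', l', r', hnode', hrest'⟩
          rw [this]

/-- Every occurrence of a pattern P (|P| ≥ 2) in val(S) is captured by a unique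
lowest derivation-tree node whose left/right boundary the occurrence straddles,
with a unique split 1 ≤ j' < |P|. -/
theorem stmt_16 {α : Type*} (n : ℕ) (hn : 1 ≤ n)
    (rhs : Fin n → α ⊕ (Fin n × Fin n))
    (wf : ∀ i p, rhs i = Sum.inr p → p.1 < i ∧ p.2 < i)
    (v : Fin n → List α)
    (hv1 : ∀ i a, rhs i = Sum.inl a → v i = [a])
    (hv2 : ∀ i p, rhs i = Sum.inr p → v i = v p.1 ++ v p.2)
    (start : Fin n) (hstart : (start : ℕ) = n - 1)
    (P : List α) (hP : 2 ≤ P.length)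
    (o : ℕ) (hin : o + P.length ≤ (v start).length)
    (hocc : ((v start).drop o).take P.length = P) :
    ∃! x : List Bool × ℕ,
      ∃ (i : Fin n) (p : ℕ) (l r : Fin n),
        nodeAt rhs v start 0 x.1 = some (i, p) ∧
        rhs i = Sum.inr (l, r) ∧
        1 ≤ x.2 ∧ x.2 < P.length ∧
        p ≤ o ∧ o + P.length ≤ p + (v i).length ∧
        p + (v l).length = o + x.2 := by
  obtain ⟨π, j', i2, p2, l, r, hnode, hr, hj1, hj2, hle, hge, hsplit⟩ :=
    exists_node rhs wf v hv1 hv2 P hP o (n) start (start.isLt) 0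
      (Nat.zero_le o) (by omega)
  refine ⟨(π, j'), ⟨i2, p2, l, r, hnode, hr, hj1, hj2, hle, hge, hsplit⟩, ?_⟩
  rintro ⟨π', j''⟩ ⟨i3, p3, l3, r3, hnode3, hr3, hj1', hj2', hle3, hge3, hsplit3⟩
  have hpath : π' = π := by
    apply unique_node rhs v hv2 P hP o π' π start 0
    · exact ⟨i3, p3, l3, r3, hnode3, hr3, hle3, hge3, by omega, by omega⟩
    · exact ⟨i2, p2, l, r, hnode, hr, hle, hge, by omega, by omega⟩
  subst hpath
  rw [hnode] at hnode3
  simp only [Option.some.injEq, Prod.mk.injEq] at hnode3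
  obtain ⟨e1, e2⟩ := hnode3; subst e1; subst e2
  rw [hr] at hr3
  simp only [Sum.inr.injEq, Prod.mk.injEq] at hr3
  obtain ⟨e3, _⟩ := hr3; subst e3
  have : j'' = j' := by omega
  rw [this]
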